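/- Let N ≥ 2, β ∈ (1/(2N-1), 1/N), and suppose (N−1−|t_ℓ|)_{ℓ≥1} = σ (σ+τ)^∞ where σ = (σ_ℓ)_{ℓ=1}^q, τ = (τ_ℓ)_{ℓ=1}^q, and σ+τ has entries in {0,…,N−1}. Then Γ_t := π(∏_{ℓ=1}^∞ {0,…,N−1−|t_ℓ|}) is the attractor of the IFS {f_s(x) = β^q(x+s) : s ∈ S}, where S = {β^{−q} Σ_{ℓ=1}^{2q} j_ℓ β^{ℓ-1}(1−β)/(N−1) : (j_ℓ)_{ℓ=1}^{2q} ≤ στ coordinatewise, j_ℓ ∈ {0,…,N−1}}. -/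

import Mathlib

/-- The set Γ_t = π(∏ {0,…,N−1−|t_ℓ|}). -/
noncomputable def GammaT (N : ℕ) (β : ℝ) (t : ℕ → ℤ) : Set ℝ :=
  {x | ∃ a : ℕ → ℕ, (∀ n, (a n : ℤ) ≤ (N : ℤ) - 1 - |t n|) ∧
    x = ∑' n, (a n : ℝ) * β ^ n * (1 - β) / ((N : ℝ) - 1)}

lemma summ_aux (β C K : ℝ) (hβ0 : 0 < β) (hβ1 : β < 1) (a : ℕ → ℕ)
    (ha : ∀ n, (a n : ℝ) ≤ K) :
    Summable (fun n => (a n : ℝ) * β ^ n * C) := by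
  have hK : Summable (fun n : ℕ => K * β ^ n) :=
    (summable_geometric_of_lt_one hβ0.le hβ1).mul_left K
  have : Summable (fun n : ℕ => (a n : ℝ) * β ^ n) := by
    refine Summable.of_nonneg_of_le (fun n => ?_) (fun n => ?_) hK
    · positivity
    · exact mul_le_mul_of_nonneg_right (ha n) (pow_nonneg hβ0.le n)
  exact this.mul_right C

lemma key_aux (q : ℕ) (β C K : ℝ) (hβ0 : 0 < β) (hβ1 : β < 1)
    (a a' c : ℕ → ℕ) (ha : ∀ n, (a n : ℝ) ≤ K) (ha' : ∀ n, (a' n : ℝ) ≤ K)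
    (h : ∀ m, a m = (if m < 2 * q then c m else 0) + (if q ≤ m then a' (m - q) else 0)) :
    ∑' n, (a n : ℝ) * β ^ n * C
      = (∑ l ∈ Finset.range (2 * q), (c l : ℝ) * β ^ l * C)
        + β ^ q * ∑' n, (a' n : ℝ) * β ^ n * C := by
  have hA := summ_aux β C K hβ0 hβ1 a ha
  have hA' := summ_aux β C K hβ0 hβ1 a' ha'
  rw [← hA.sum_add_tsum_nat_add (2 * q), ← hA'.sum_add_tsum_nat_add q]
  have htail : ∀ n : ℕ, (a (n + 2 * q) : ℝ) * β ^ (n + 2 * q) * C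
      = β ^ q * ((a' (n + q) : ℝ) * β ^ (n + q) * C) := by
    intro n
    have hm := h (n + 2 * q)
    rw [if_neg (by omega), if_pos (by omega), show n + 2 * q - q = n + q by omega] at hm
    rw [hm]; push_cast; ring
  have hhead1 : ∀ l ∈ Finset.range q, (a l : ℝ) * β ^ l * C = (c l : ℝ) * β ^ l * C := by
    intro l hl
    rw [Finset.mem_range] at hl
    have hm := h l
    rw [if_pos (by omega), if_neg (by omega)] at hm
    rw [hm]; push_cast; ring
  have hhead2 : ∀ n ∈ Finset.range q, (a (q + n) : ℝ) * β ^ (q + n) * C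
      = (c (q + n) : ℝ) * β ^ (q + n) * C + β ^ q * ((a' n : ℝ) * β ^ n * C) := by
    intro n hn
    rw [Finset.mem_range] at hn
    have hm := h (q + n)
    rw [if_pos (by omega), if_pos (by omega), show q + n - q = n by omega] at hm
    rw [hm]; push_cast; ring
  rw [tsum_congr htail, tsum_mul_left]
  rw [show (2 : ℕ) * q = q + q from two_mul q, Finset.sum_range_add, Finset.sum_range_add]
  rw [Finset.sum_congr rfl hhead1, Finset.sum_congr rfl hhead2, Finset.sum_add_distrib,
    ← Finset.mul_sum]
  ring

/-- if (N−1−|t_ℓ|) = σ(σ+τ)^∞, then Γ_t is the attractor of the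
IFS {x ↦ β^q (x+s) : s ∈ S} with S as described. -/
theorem stmt8 (N q : ℕ) (hN : 2 ≤ N) (hq : 0 < q) (β : ℝ)
    (h1 : 1 / (2 * (N : ℝ) - 1) < β) (h2 : β < 1 / (N : ℝ))
    (t : ℕ → ℤ) (ht : ∀ n, |t n| ≤ (N : ℤ) - 1)
    (σ τ : ℕ → ℕ) (hστ : ∀ l < q, σ l + τ l ≤ N - 1)
    (hper : ∀ n, (N : ℤ) - 1 - |t n|
      = if n < q then (σ n : ℤ) else ((σ ((n - q) % q) + τ ((n - q) % q) : ℕ) : ℤ)) :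
    GammaT N β t
      = ⋃ s ∈ {x : ℝ | ∃ c : ℕ → ℕ,
            (∀ l < 2 * q, c l ≤ (if l < q then σ l else τ (l - q))) ∧
            x = (β ^ q)⁻¹ *
              ∑ l ∈ Finset.range (2 * q), (c l : ℝ) * β ^ l * (1 - β) / ((N : ℝ) - 1)},
          (fun x => β ^ q * (x + s)) '' GammaT N β t := by
  have hNR : (2 : ℝ) ≤ (N : ℝ) := by exact_mod_cast hN
  have hβ0 : 0 < β := by
    have h2N : (0:ℝ) < 2 * (N:ℝ) - 1 := by linarith
    exact lt_trans (by positivity) h1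
  have hβ1 : β < 1 := lt_of_lt_of_le h2 (by
    rw [div_le_one (by linarith)]; linarith)
  have hβq : (β : ℝ) ^ q ≠ 0 := pow_ne_zero q hβ0.ne'
  set C : ℝ := (1 - β) / ((N : ℝ) - 1) with hC
  have hterm : ∀ (d : ℕ → ℕ) (n : ℕ),
      (d n : ℝ) * β ^ n * (1 - β) / ((N : ℝ) - 1) = (d n : ℝ) * β ^ n * C := by
    intro d n; rw [hC, mul_div_assoc]
  -- bound helper
  have hbd : ∀ (d : ℕ → ℕ), (∀ n, (d n : ℤ) ≤ (N : ℤ) - 1 - |t n|) →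
      ∀ n, (d n : ℝ) ≤ (N : ℝ) - 1 := by
    intro d hd n
    have h1 : (d n : ℤ) ≤ (N : ℤ) - 1 := le_trans (hd n) (by have := abs_nonneg (t n); omega)
    exact_mod_cast h1
  ext x
  simp only [Set.mem_iUnion, Set.mem_image, Set.mem_setOf_eq, exists_prop]
  constructor
  · rintro ⟨a, hab, rfl⟩
    set a' : ℕ → ℕ := fun n => if n < q then min (a (n + q)) (σ n) else a (n + q) with ha'def
    set c : ℕ → ℕ := fun l => if l < q then a l
      else (if l < 2 * q then a l - min (a l) (σ (l - q)) else 0) with hcdef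
    -- bounds on a' in terms of t
    have ha'b : ∀ n, (a' n : ℤ) ≤ (N : ℤ) - 1 - |t n| := by
      intro n
      by_cases hn : n < q
      · have : a' n = min (a (n + q)) (σ n) := by simp [ha'def, hn]
        rw [this, hper n, if_pos hn]
        have := min_le_right (a (n + q)) (σ n)
        exact_mod_cast this
      · have hne : a' n = a (n + q) := by simp [ha'def, hn]
        have h1 := hab (n + q)
        rw [hper (n + q), if_neg (by omega), show n + q - q = n from by omega] at h1
        rw [hne, hper n, if_neg hn]
        have hmod : (n - q) % q = n % q := by
          conv_rhs => rw [show n = (n - q) + q by omega]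
          rw [Nat.add_mod_right]
        rw [hmod]; exact h1
    -- the decomposition identity
    have hdec : ∀ m, a m = (if m < 2 * q then c m else 0) + (if q ≤ m then a' (m - q) else 0) := by
      intro m
      rcases lt_or_ge m q with hm | hm
      · simp [hcdef, hm, show m < 2 * q by omega, show ¬ q ≤ m by omega]
      · rcases lt_or_ge m (2 * q) with hm2 | hm2
        · have h1 : c m = a m - min (a m) (σ (m - q)) := by
            simp [hcdef, show ¬ m < q by omega, hm2]
          have h2 : a' (m - q) = min (a m) (σ (m - q)) := by
            simp [ha'def, show m - q < q by omega, show m - q + q = m by omega]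
          rw [if_pos hm2, if_pos hm, h1, h2]
          omega
        · have h2 : a' (m - q) = a m := by
            simp [ha'def, show ¬ m - q < q by omega, show m - q + q = m by omega]
          rw [if_neg (by omega), if_pos hm, h2]
          omega
    -- membership of s in S
    have hcb : ∀ l < 2 * q, c l ≤ (if l < q then σ l else τ (l - q)) := by
      intro l hl
      rcases lt_or_ge l q with hlq | hlq
      · have h1 := hab l
        rw [hper l, if_pos hlq] at h1
        have : a l ≤ σ l := by exact_mod_cast h1
        simpa [hcdef, hlq] using this
      · have h1 := hab l
        rw [hper l, if_neg (by omega), Nat.mod_eq_of_lt (by omega)] at h1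
        have h2 : a l ≤ σ (l - q) + τ (l - q) := by exact_mod_cast h1
        rw [if_neg (by omega)]
        have : c l = a l - min (a l) (σ (l - q)) := by
          simp [hcdef, show ¬ l < q by omega, hl]
        rw [this]; omega
    refine ⟨(β ^ q)⁻¹ * ∑ l ∈ Finset.range (2 * q), (c l : ℝ) * β ^ l * (1 - β) / ((N : ℝ) - 1),
      ⟨c, hcb, rfl⟩, ∑' n, (a' n : ℝ) * β ^ n * (1 - β) / ((N : ℝ) - 1), ⟨a', ha'b, rfl⟩, ?_⟩
    have hkey := key_aux q β C ((N : ℝ) - 1) hβ0 hβ1 a a' c (hbd a hab) (hbd a' ha'b) hdec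
    simp only [hterm]
    rw [hkey]
    field_simp
    ring_nf
    simp only [mul_comm, mul_left_comm, mul_assoc]
  · rintro ⟨s, ⟨c, hcb, rfl⟩, y, ⟨a', ha'b, rfl⟩, rfl⟩
    set a : ℕ → ℕ := fun m =>
      (if m < 2 * q then c m else 0) + (if q ≤ m then a' (m - q) else 0) with hadef
    have hab : ∀ n, (a n : ℤ) ≤ (N : ℤ) - 1 - |t n| := by
      intro m
      rcases lt_or_ge m q with hm | hm
      · have h1 : a m = c m := by simp [hadef, show m < 2 * q by omega, show ¬ q ≤ m by omega]
        have h2 := hcb m (by omega)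
        rw [if_pos hm] at h2
        rw [hper m, if_pos hm, h1]
        exact_mod_cast h2
      · rcases lt_or_ge m (2 * q) with hm2 | hm2
        · have h1 : a m = c m + a' (m - q) := by simp [hadef, hm2, hm]
          have h2 := hcb m hm2
          rw [if_neg (by omega)] at h2
          have h3 := ha'b (m - q)
          rw [hper (m - q), if_pos (by omega)] at h3
          rw [hper m, if_neg (by omega), Nat.mod_eq_of_lt (by omega), h1]
          push_cast
          push_cast at h3
          have h2' : (c m : ℤ) ≤ (τ (m - q) : ℤ) := by exact_mod_cast h2
          linarith
        · have h1 : a m = a' (m - q) := by simp [hadef, show ¬ m < 2 * q by omega, hm]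
          have h3 := ha'b (m - q)
          rw [hper (m - q), if_neg (by omega)] at h3
          rw [hper m, if_neg (by omega)]
          have hmod : (m - q - q) % q = (m - q) % q := by
            conv_rhs => rw [show m - q = (m - q - q) + q by omega]
            rw [Nat.add_mod_right]
          rw [hmod] at h3
          rw [h1]; exact h3
    refine ⟨a, hab, ?_⟩
    have hkey := key_aux q β C ((N : ℝ) - 1) hβ0 hβ1 a a' c (hbd a hab) (hbd a' ha'b)
      (fun m => rfl)
    simp only [hterm]
    rw [hkey]
    field_simp
    ring_nf
    simp only [mul_comm, mul_left_comm, mul_assoc]
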